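/- Let A be a matrix in SU(1,1;ℂ) with first row (a,b), and let z ∈ ℂ with |z| < 1. Then η(A)·ζ(z) = ζ(A·z), where A·z = (a·z + b)/(b̄·z + ā); that is, the map η is compatible with stereographic projection from the conformal disk model to the hyperboloid model of the hyperbolic plane. -/

import Mathlib

open Matrix

noncomputable section

/-- The matrix `J = diag(1, -1)` in `M₂(ℂ)`. -/
def Jc : Matrix (Fin 2) (Fin 2) ℂ := !![1, 0; 0, -1]

/-- `SU(1,1;ℂ) = {A ∈ M₂(ℂ) : A*JA = J and det A = 1}`. -/
def SU11C : Set (Matrix (Fin 2) (Fin 2) ℂ) := {A | Aᴴ * Jc * A = Jc ∧ A.det = 1}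

/-- The double covering map `η : SU(1,1;ℂ) → SO⁺(2,1)`, written with
`a = A₀₀ = a₁ + a₂ i` and `b = A₀₁ = b₁ + b₂ i`. -/
def eta (A : Matrix (Fin 2) (Fin 2) ℂ) : Matrix (Fin 3) (Fin 3) ℝ :=
  let a1 := (A 0 0).re; let a2 := (A 0 0).im
  let b1 := (A 0 1).re; let b2 := (A 0 1).im
  !![1 - 2*a2^2 + 2*b1^2, -2*a1*a2 + 2*b1*b2, 2*a1*b1 - 2*a2*b2;
     2*a1*a2 + 2*b1*b2, 1 - 2*a2^2 + 2*b2^2, 2*a1*b2 + 2*a2*b1;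
     2*a1*b1 + 2*a2*b2, 2*a1*b2 - 2*a2*b1, 1 + 2*b1^2 + 2*b2^2]

/-- Stereographic projection ζ : B² → H² ⊆ ℝ³ from the conformal disk model to the
hyperboloid model of the hyperbolic plane. -/
def zeta (z : ℂ) : Fin 3 → ℝ :=
  ![2 * z.re / (1 - ‖z‖ ^ 2),
    2 * z.im / (1 - ‖z‖ ^ 2),
    (1 + ‖z‖ ^ 2) / (1 - ‖z‖ ^ 2)]

theorem stmt19 (A : Matrix (Fin 2) (Fin 2) ℂ) (hA : A ∈ SU11C)
    (a b : ℂ) (ha : a = A 0 0) (hb : b = A 0 1)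
    (z : ℂ) (hz : ‖z‖ < 1) :
    (eta A).mulVec (zeta z) = zeta ((a * z + b) / (star b * z + star a)) := by
  obtain ⟨h, -⟩ := hA
  -- step 1 : |a|^2 - |b|^2 = 1
  have hn : a.re^2 + a.im^2 - b.re^2 - b.im^2 = 1 := by
    have hJJ : Jc * Jc = 1 := by
      rw [Jc, show (1 : Matrix (Fin 2) (Fin 2) ℂ) = !![1,0;0,1] by rw [Matrix.one_fin_two]]
      norm_num [Matrix.mul_fin_two]
    have h1 : (Jc * Aᴴ * Jc) * A = 1 := by
      have h0 : Jc * (Aᴴ * Jc * A) = Jc * Jc := by rw [h]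
      rw [hJJ] at h0
      simpa [Matrix.mul_assoc] using h0
    have h2 : A * (Jc * Aᴴ * Jc) = 1 := mul_eq_one_comm.mp h1
    have h3 : A * Jc * Aᴴ = Jc := by
      have h4 : A * (Jc * Aᴴ * Jc) * Jc = 1 * Jc := by rw [h2]
      rw [Matrix.mul_assoc, Matrix.mul_assoc, Matrix.mul_assoc, hJJ, Matrix.mul_one,
        Matrix.one_mul] at h4
      rw [Matrix.mul_assoc]; exact h4
    have h5 := congrFun (congrFun h3 0) 0
    simp [Jc, Matrix.mul_apply, Fin.sum_univ_two, Matrix.conjTranspose_apply] at h5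
    have h6 := congrArg Complex.re h5
    simp [ha, hb, Complex.mul_re, Complex.conj_re, Complex.conj_im] at h6 ⊢
    all_goals linarith
  have hs : ‖z‖ ^ 2 = z.re^2 + z.im^2 := by
    rw [Complex.sq_norm, Complex.normSq_apply]; ring
  have hzs : z.re^2 + z.im^2 < 1 := by
    rw [← hs]; nlinarith [norm_nonneg z]
  have h1s : (1:ℝ) - (z.re^2 + z.im^2) ≠ 0 := by nlinarith
  set u : ℂ := star b * z + star a with hu
  set v : ℂ := a * z + b with hv
  have hkey : Complex.normSq u - Complex.normSq v = 1 - (z.re^2 + z.im^2) := by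
    simp only [hu, hv, Complex.normSq_apply, Complex.add_re, Complex.add_im, Complex.mul_re,
      Complex.mul_im, Complex.star_def, Complex.conj_re, Complex.conj_im]
    linear_combination (1 - z.re^2 - z.im^2) * hn
  have hNpos : 0 < Complex.normSq u := by
    have := Complex.normSq_nonneg v
    nlinarith
  have hN : Complex.normSq u ≠ 0 := ne_of_gt hNpos
  have habsw : 1 - ‖v / u‖ ^ 2 = (1 - (z.re^2 + z.im^2)) / Complex.normSq u := by
    rw [Complex.sq_norm, Complex.normSq_div, eq_div_iff hN, sub_mul, one_mul,
      div_mul_cancel₀ _ hN, ← hkey]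
  have hwre : (v / u).re = (v.re * u.re + v.im * u.im) / Complex.normSq u := by
    rw [Complex.div_re]; ring
  have hwim : (v / u).im = (v.im * u.re - v.re * u.im) / Complex.normSq u := by
    rw [Complex.div_im]; ring
  have habsw2 : ‖v / u‖ ^ 2 = Complex.normSq v / Complex.normSq u := by
    rw [Complex.sq_norm, Complex.normSq_div]

  funext i
  have haddw : 1 + ‖v / u‖ ^ 2
      = (Complex.normSq u + Complex.normSq v) / Complex.normSq u := by
    rw [Complex.sq_norm, Complex.normSq_div, eq_div_iff hN, add_mul, one_mul,
      div_mul_cancel₀ _ hN]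
  have E1 : 2 * ((v.re * u.re + v.im * u.im) / Complex.normSq u)
      / ((1 - (z.re^2 + z.im^2)) / Complex.normSq u)
      = 2 * (v.re * u.re + v.im * u.im) / (1 - (z.re^2 + z.im^2)) := by
    field_simp
  have E2 : 2 * ((v.im * u.re - v.re * u.im) / Complex.normSq u)
      / ((1 - (z.re^2 + z.im^2)) / Complex.normSq u)
      = 2 * (v.im * u.re - v.re * u.im) / (1 - (z.re^2 + z.im^2)) := by
    field_simp
  have E3 : (Complex.normSq u + Complex.normSq v) / Complex.normSq u
      / ((1 - (z.re^2 + z.im^2)) / Complex.normSq u)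
      = (Complex.normSq u + Complex.normSq v) / (1 - (z.re^2 + z.im^2)) := by
    field_simp
  fin_cases i
  · show _ = zeta (v / u) 0
    simp only [Matrix.mulVec, eta, zeta, ← ha, ← hb, dotProduct, Fin.sum_univ_three]
    simp only [Matrix.cons_val', Matrix.cons_val_zero, Matrix.cons_val_one, Matrix.head_cons,
      Matrix.empty_val', Matrix.cons_val_fin_one, Matrix.of_apply, Matrix.cons_val_two,
      Matrix.tail_cons, Fin.mk_zero, Fin.mk_one, Fin.reduceFinMk, Matrix.vecHead, hs, habsw, haddw, hwre, hwim, E1, E2, E3]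
    rw [← mul_div_assoc, ← mul_div_assoc, ← mul_div_assoc, ← add_div, ← add_div,
      div_eq_div_iff h1s h1s]
    simp only [hu, hv, Complex.normSq_apply, Complex.add_re, Complex.add_im, Complex.mul_re,
      Complex.mul_im, Complex.star_def, Complex.conj_re, Complex.conj_im]
    linear_combination (-(2*z.re)*(1 - z.re^2 - z.im^2)) * hn
  · show _ = zeta (v / u) 1
    simp only [Matrix.mulVec, eta, zeta, ← ha, ← hb, dotProduct, Fin.sum_univ_three]
    simp only [Matrix.cons_val', Matrix.cons_val_zero, Matrix.cons_val_one, Matrix.head_cons,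
      Matrix.empty_val', Matrix.cons_val_fin_one, Matrix.of_apply, Matrix.cons_val_two,
      Matrix.tail_cons, Fin.mk_zero, Fin.mk_one, Fin.reduceFinMk, Matrix.vecHead, hs, habsw, haddw, hwre, hwim, E1, E2, E3]
    rw [← mul_div_assoc, ← mul_div_assoc, ← mul_div_assoc, ← add_div, ← add_div,
      div_eq_div_iff h1s h1s]
    simp only [hu, hv, Complex.normSq_apply, Complex.add_re, Complex.add_im, Complex.mul_re,
      Complex.mul_im, Complex.star_def, Complex.conj_re, Complex.conj_im]
    linear_combination (-(2*z.im)*(1 - z.re^2 - z.im^2)) * hn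
  · show _ = zeta (v / u) 2
    simp only [Matrix.mulVec, eta, zeta, ← ha, ← hb, dotProduct, Fin.sum_univ_three]
    simp only [Matrix.cons_val', Matrix.cons_val_zero, Matrix.cons_val_one, Matrix.head_cons,
      Matrix.empty_val', Matrix.cons_val_fin_one, Matrix.of_apply, Matrix.cons_val_two,
      Matrix.tail_cons, Fin.mk_zero, Fin.mk_one, Fin.reduceFinMk, Matrix.vecHead, hs, habsw, haddw, hwre, hwim, E1, E2, E3]
    rw [← mul_div_assoc, ← mul_div_assoc, ← mul_div_assoc, ← add_div, ← add_div,
      div_eq_div_iff h1s h1s]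
    simp only [hu, hv, Complex.normSq_apply, Complex.add_re, Complex.add_im, Complex.mul_re,
      Complex.mul_im, Complex.star_def, Complex.conj_re, Complex.conj_im]
    linear_combination (-(1 + z.re^2 + z.im^2)*(1 - z.re^2 - z.im^2)) * hn
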